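/- arXiv:2105.00407 — 2 statements merged into one kernel-verified Lean document; each statement's English description precedes it below -/
import Mathlib

section
/- Every self-similar necklace in ℝ^d satisfying the open set condition is of bounded ramification: for each main node z_k of F, the sequence {c_m(z_k)}_{m≥1} is bounded. -/
open Set Topology Metric Bornology

noncomputable section

/-- Euclidean space `ℝ^d`. -/
abbrev Euc (d : ℕ) := EuclideanSpace ℝ (Fin d)

/-- A fractal necklace in `ℝ^d`: the attractor `F` of a necklace IFS `f_1, …, f_n`
(`n ≥ 3`) of contractive homeomorphisms of `ℝ^d`, where cyclically adjacent 1-level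
copies meet in a single point (a main node `z k`) and non-adjacent copies are disjoint. -/
structure Necklace (d : ℕ) where
  n : ℕ
  hn : 3 ≤ n
  f : Fin n → (Euc d ≃ₜ Euc d)
  contr : ∀ k, ∃ c : NNReal, c < 1 ∧ LipschitzWith c (f k)
  F : Set (Euc d)
  Fne : F.Nonempty
  Fcpt : IsCompact F
  Fattr : F = ⋃ k, (f k) '' F
  z : Fin n → Euc d
  hz : ∀ k : Fin n, (f k) '' F ∩ (f (k + ⟨1, by omega⟩)) '' F = {z k}
  hdisj : ∀ m k : Fin n, m ≠ k → m ≠ k + ⟨1, by omega⟩ → k ≠ m + ⟨1, by omega⟩ →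
    (f m) '' F ∩ (f k) '' F = ∅

namespace Necklace

variable {d : ℕ}

/-- The digit `1` of `Fin n`. -/
def one (N : Necklace d) : Fin N.n := ⟨1, by have := N.hn; omega⟩

/-- The homeomorphism `f_σ = f_{i₁} ∘ ⋯ ∘ f_{i_m}` associated to a word `σ = i₁⋯i_m`. -/
def word (N : Necklace d) : List (Fin N.n) → (Euc d ≃ₜ Euc d)
  | [] => Homeomorph.refl _
  | i :: s => (N.word s).trans (N.f i)

/-- The copy `F_σ = f_σ(F)` of the necklace. -/
def copy (N : Necklace d) (σ : List (Fin N.n)) : Set (Euc d) := N.word σ '' N.F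

/-- `c_m(x)`: the number of words `σ` of length `m` with `x ∈ F_σ`. -/
def cnt (N : Necklace d) (m : ℕ) (x : Euc d) : ℕ :=
  Set.ncard {σ : List (Fin N.n) | σ.length = m ∧ x ∈ N.copy σ}

/-- The boundary `∂_F F_k = {z_{k-1}, z_k}` of the 1-level copy `F_k` in `F`. -/
def bdry (N : Necklace d) (k : Fin N.n) : Set (Euc d) := {N.z (k - N.one), N.z k}

/-- A necklace is stable if for each `k` at least two second-level copies `F_{kj}`
meet `∂_F F_k`. -/
def Stable (N : Necklace d) : Prop :=
  ∀ k : Fin N.n,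
    2 ≤ Set.ncard {A : Set (Euc d) |
      (∃ j : Fin N.n, A = N.f k '' (N.f j '' N.F)) ∧ (A ∩ N.bdry k).Nonempty}

/-- A necklace is good if `∂_F F_k` is not contained in any second-level copy `F_{kj}`. -/
def Good (N : Necklace d) : Prop :=
  ∀ k j : Fin N.n, ¬ (N.bdry k ⊆ N.f k '' (N.f j '' N.F))

/-- A necklace is of bounded ramification if `{c_m(z_k)}_m` is bounded for each `k`. -/
def BoundedRamification (N : Necklace d) : Prop :=
  ∀ k : Fin N.n, ∃ C : ℕ, ∀ m : ℕ, N.cnt m (N.z k) ≤ C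

/-- `M_F`: the set of points that are main nodes of some copy of `F`. -/
def MF (N : Necklace d) : Set (Euc d) :=
  {x | ∃ (σ : List (Fin N.n)) (k : Fin N.n), x = N.word σ (N.z k)}

/-- A necklace has no cut points if `F \ {x}` is connected for every `x ∈ F`. -/
def NoCutPoints (N : Necklace d) : Prop :=
  ∀ x ∈ N.F, IsConnected (N.F \ {x})

/-- Property I: each 1-level copy `F_k` has an arc from `z_{k-1}` to `z_k` passing
through at least two main nodes of `F_k`. -/
def PropertyI (N : Necklace d) : Prop :=
  ∀ k : Fin N.n, ∃ γ : Path (N.z (k - N.one)) (N.z k),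
    Function.Injective γ ∧ (∀ t, γ t ∈ N.f k '' N.F) ∧
    ∃ p q : Euc d, p ≠ q ∧ (∃ j, p = N.f k (N.z j)) ∧ (∃ j, q = N.f k (N.z j)) ∧
      p ∈ Set.range γ ∧ q ∈ Set.range γ

/-- A necklace is self-similar if the maps of its NIFS are (contractive) similitudes. -/
def SelfSimilar (N : Necklace d) : Prop :=
  ∀ k : Fin N.n, ∃ c : ℝ, 0 < c ∧ c < 1 ∧ ∀ x y, dist (N.f k x) (N.f k y) = c * dist x y

/-- The open set condition for the NIFS of a necklace. -/
def OSC (N : Necklace d) : Prop :=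
  ∃ V : Set (Euc d), V.Nonempty ∧ IsOpen V ∧ IsBounded V ∧
    (∀ k, N.f k '' V ⊆ V) ∧ ∀ j k : Fin N.n, j ≠ k → N.f j '' V ∩ N.f k '' V = ∅

end Necklace


open MeasureTheory

namespace Necklace
variable {d : ℕ} (N : Necklace d)

lemma word_cons (i : Fin N.n) (s : List (Fin N.n)) (x : Euc d) :
    N.word (i :: s) x = N.f i (N.word s x) := rfl

lemma word_append (σ ρ : List (Fin N.n)) (x : Euc d) :
    N.word (σ ++ ρ) x = N.word σ (N.word ρ x) := by
  induction σ with
  | nil => rfl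
  | cons i s ih => simp [word_cons, ih]

lemma image_f_subset (i : Fin N.n) : N.f i '' N.F ⊆ N.F := by
  conv_rhs => rw [N.Fattr]
  exact subset_iUnion_of_subset i le_rfl

lemma copy_nil : N.copy [] = N.F := by
  simp [copy, word]

lemma copy_cons (i : Fin N.n) (s : List (Fin N.n)) :
    N.copy (i :: s) = N.f i '' N.copy s := by
  simp [copy, word, Set.image_image]; rfl

lemma copy_subset (σ : List (Fin N.n)) : N.copy σ ⊆ N.F := by
  induction σ with
  | nil => rw [copy_nil]
  | cons i s ih =>
    rw [copy_cons]
    exact (Set.image_mono ih).trans (N.image_f_subset i)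

lemma copy_append (σ ρ : List (Fin N.n)) : N.copy (σ ++ ρ) = N.word σ '' N.copy ρ := by
  ext x
  constructor
  · rintro ⟨y, hy, rfl⟩
    exact ⟨N.word ρ y, ⟨y, hy, rfl⟩, (N.word_append σ ρ y).symm⟩
  · rintro ⟨w, ⟨y, hy, rfl⟩, rfl⟩
    exact ⟨y, hy, N.word_append σ ρ y⟩

lemma mem_copy_cons (i : Fin N.n) (s : List (Fin N.n)) (x : Euc d) :
    x ∈ N.copy (i :: s) ↔ (N.f i).symm x ∈ N.copy s := by
  rw [copy_cons]
  exact ⟨fun ⟨y, hy, he⟩ => by simpa [← he] using hy, fun h => ⟨_, h, by simp⟩⟩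

end Necklace

namespace Necklace
variable {d : ℕ} (N : Necklace d)

lemma cntSet_finite (m : ℕ) (x : Euc d) :
    {σ : List (Fin N.n) | σ.length = m ∧ x ∈ N.copy σ}.Finite :=
  (List.finite_length_eq (Fin N.n) m).subset fun _ h => h.1

lemma cnt_eq_zero {x : Euc d} (hx : x ∉ N.F) (m : ℕ) : N.cnt m x = 0 := by
  rw [cnt, Set.ncard_eq_zero (N.cntSet_finite m x)]
  ext σ
  simp only [Set.mem_setOf_eq, Set.mem_empty_iff_false, iff_false, not_and]
  exact fun _ h => hx (N.copy_subset σ h)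

lemma cnt_zero_le (x : Euc d) : N.cnt 0 x ≤ 1 := by
  have h : {σ : List (Fin N.n) | σ.length = 0 ∧ x ∈ N.copy σ} ⊆ {([] : List (Fin N.n))} := by
    rintro σ ⟨h1, -⟩
    simpa [List.length_eq_zero_iff] using h1
  rw [cnt]
  exact (Set.ncard_le_ncard h (Set.finite_singleton _)).trans (by simp)

lemma cnt_succ_le (m : ℕ) (x : Euc d) :
    N.cnt (m + 1) x ≤ ∑ j : Fin N.n, N.cnt m ((N.f j).symm x) := by
  classical
  set T : Fin N.n → Finset (List (Fin N.n)) :=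
    fun j => (N.cntSet_finite m ((N.f j).symm x)).toFinset with hT
  have hsub : {σ : List (Fin N.n) | σ.length = m + 1 ∧ x ∈ N.copy σ} ⊆
      ↑(Finset.univ.biUnion fun j => (T j).image (List.cons j)) := by
    rintro σ ⟨hlen, hmem⟩
    match σ with
    | [] => simp at hlen
    | i :: s =>
      simp only [Finset.coe_biUnion, Finset.mem_coe, Finset.mem_biUnion, Finset.mem_image,
        Finset.mem_univ, true_and, Set.mem_iUnion]
      refine ⟨i, trivial, s, ?_, rfl⟩
      rw [hT]
      simp only [Set.Finite.mem_toFinset, Set.mem_setOf_eq]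
      exact ⟨by simpa using hlen, (N.mem_copy_cons i s x).1 hmem⟩
  calc N.cnt (m+1) x ≤ (Finset.univ.biUnion fun j => (T j).image (List.cons j)).card := by
        rw [← Set.ncard_coe_finset]
        exact Set.ncard_le_ncard hsub (Finset.finite_toSet _)
    _ ≤ ∑ j : Fin N.n, ((T j).image (List.cons j)).card := Finset.card_biUnion_le
    _ ≤ ∑ j : Fin N.n, N.cnt m ((N.f j).symm x) := by
        refine Finset.sum_le_sum fun j _ => ?_
        calc ((T j).image (List.cons j)).card ≤ (T j).card := Finset.card_image_le
          _ = N.cnt m ((N.f j).symm x) := by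
              rw [hT, cnt, Set.ncard_eq_toFinset_card _ (N.cntSet_finite m ((N.f j).symm x))]

end Necklace

namespace Necklace
variable {d : ℕ} (N : Necklace d)

/-- Points in two distinct 1-level copies are main nodes. -/
lemma exists_node {x : Euc d} {j j' : Fin N.n} (hjj' : j ≠ j')
    (h1 : x ∈ N.f j '' N.F) (h2 : x ∈ N.f j' '' N.F) : ∃ a, x = N.z a := by
  by_cases hc : j' = j + N.one
  · subst hc
    have hm : x ∈ ({N.z j} : Set (Euc d)) := by
      rw [← N.hz j]; exact ⟨h1, h2⟩
    exact ⟨j, hm⟩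
  · by_cases hc' : j = j' + N.one
    · subst hc'
      have hm : x ∈ ({N.z j'} : Set (Euc d)) := by
        rw [← N.hz j']; exact ⟨h2, h1⟩
      exact ⟨j', hm⟩
    · have he := N.hdisj j j' hjj' hc' (fun h => hc h)
      have : x ∈ ⇑(N.f j) '' N.F ∩ ⇑(N.f j') '' N.F := ⟨h1, h2⟩
      rw [he] at this
      exact absurd this (Set.notMem_empty x)

/-- The set of node-indices `a` such that `x` is the image of `z a` under some word. -/
def Rset (x : Euc d) : Set (Fin N.n) := {a | ∃ τ, x = N.word τ (N.z a)}

lemma main_bound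
    (hkey : ∀ {x : Euc d} {j j' : Fin N.n}, j ≠ j' → x ∈ N.f j '' N.F → x ∈ N.f j' '' N.F →
      ∀ τ : List (Fin N.n), τ ≠ [] → N.word τ x ≠ x) :
    ∀ m (x : Euc d), N.cnt m x ≤ N.n ^ (N.Rset x).ncard := by
  have hnpos : 0 < N.n := by have := N.hn; omega
  intro m
  induction m with
  | zero => exact fun x => (N.cnt_zero_le x).trans (Nat.one_le_pow _ _ hnpos)
  | succ m ih =>
    intro x
    refine (N.cnt_succ_le m x).trans ?_
    by_cases hbr : ∃ j j' : Fin N.n, j ≠ j' ∧ (N.f j).symm x ∈ N.F ∧ (N.f j').symm x ∈ N.F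
    · obtain ⟨j, j', hjj', hj, hj'⟩ := hbr
      have hxj : x ∈ N.f j '' N.F := ⟨_, hj, by simp⟩
      have hxj' : x ∈ N.f j' '' N.F := ⟨_, hj', by simp⟩
      obtain ⟨a, hxa⟩ := N.exists_node hjj' hxj hxj'
      have ha : a ∈ N.Rset x := ⟨[], by simpa [word] using hxa⟩
      have hRpos : 1 ≤ (N.Rset x).ncard :=
        (Set.ncard_pos (Set.toFinite _)).2 ⟨a, ha⟩
      have hstep : ∀ i : Fin N.n, N.cnt m ((N.f i).symm x) ≤ N.n ^ ((N.Rset x).ncard - 1) := by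
        intro i
        by_cases hi : (N.f i).symm x ∈ N.F
        · refine (ih _).trans (Nat.pow_le_pow_right hnpos ?_)
          have hsub : N.Rset ((N.f i).symm x) ⊆ N.Rset x \ {a} := by
            rintro b ⟨τ, hb⟩
            refine ⟨⟨i :: τ, ?_⟩, ?_⟩
            · rw [N.word_cons, ← hb]; simp
            · simp only [Set.mem_singleton_iff]
              rintro rfl
              refine hkey hjj' hxj hxj' (i :: τ) (by simp) ?_
              rw [N.word_cons]
              have : N.word τ x = (N.f i).symm x := by rw [hxa] at hb ⊢; exact hb.symm
              rw [this]; simp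
          calc (N.Rset ((N.f i).symm x)).ncard ≤ (N.Rset x \ {a}).ncard :=
                Set.ncard_le_ncard hsub (Set.toFinite _)
            _ = (N.Rset x).ncard - 1 := Set.ncard_diff_singleton_of_mem ha
        · rw [N.cnt_eq_zero hi]; exact Nat.zero_le _
      calc ∑ i : Fin N.n, N.cnt m ((N.f i).symm x)
          ≤ ∑ _i : Fin N.n, N.n ^ ((N.Rset x).ncard - 1) :=
            Finset.sum_le_sum fun i _ => hstep i
        _ = N.n * N.n ^ ((N.Rset x).ncard - 1) := by
            rw [Finset.sum_const, Finset.card_univ, Fintype.card_fin, smul_eq_mul]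
        _ = N.n ^ (N.Rset x).ncard := by
            rw [← pow_succ']
            congr 1
            omega
    · push_neg at hbr
      by_cases hone : ∃ j₀ : Fin N.n, (N.f j₀).symm x ∈ N.F
      · obtain ⟨j₀, hj₀⟩ := hone
        have hz : ∀ j : Fin N.n, j ∈ Finset.univ → j ≠ j₀ → N.cnt m ((N.f j).symm x) = 0 := by
          intro j _ hj
          refine N.cnt_eq_zero (fun hmem => hj ?_) m
          by_contra hne
          exact (hbr j j₀ hne hmem).elim hj₀
        rw [Finset.sum_eq_single j₀ hz (by simp)]
        refine (ih _).trans (Nat.pow_le_pow_right hnpos ?_)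
        refine Set.ncard_le_ncard ?_ (Set.toFinite _)
        rintro b ⟨τ, hb⟩
        exact ⟨j₀ :: τ, by rw [N.word_cons, ← hb]; simp⟩
      · push_neg at hone
        have : ∀ i : Fin N.n, i ∈ Finset.univ → N.cnt m ((N.f i).symm x) = 0 :=
          fun i _ => N.cnt_eq_zero (hone i) m
        rw [Finset.sum_eq_zero this]
        exact Nat.zero_le _

end Necklace

namespace Necklace
variable {d : ℕ} (N : Necklace d)

lemma image_word_append (σ ρ : List (Fin N.n)) (A : Set (Euc d)) :
    N.word (σ ++ ρ) '' A = N.word σ '' (N.word ρ '' A) := by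
  rw [Set.image_image]
  exact Set.image_congr fun x _ => N.word_append σ ρ x

lemma word_image_V_subset {V : Set (Euc d)} (hinv : ∀ k, N.f k '' V ⊆ V) :
    ∀ σ, N.word σ '' V ⊆ V := by
  intro σ
  induction σ with
  | nil => simp [word]
  | cons i s ih =>
    have : N.word (i :: s) '' V = N.f i '' (N.word s '' V) := by
      rw [Set.image_image]; rfl
    rw [this]
    exact (Set.image_mono ih).trans (hinv i)

lemma word_sep {V : Set (Euc d)} (hinv : ∀ k, N.f k '' V ⊆ V)
    (hdisjV : ∀ j k : Fin N.n, j ≠ k → N.f j '' V ∩ N.f k '' V = ∅)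
    (π s s' : List (Fin N.n)) {i i' : Fin N.n} (hii' : i ≠ i') :
    Disjoint (N.word (π ++ i :: s) '' V) (N.word (π ++ i' :: s') '' V) := by
  rw [N.image_word_append, N.image_word_append]
  refine Set.disjoint_image_of_injective (N.word π).injective ?_
  have h1 : N.word (i :: s) '' V ⊆ N.f i '' V := by
    have : N.word (i :: s) '' V = N.f i '' (N.word s '' V) := by
      rw [Set.image_image]; rfl
    rw [this]
    exact Set.image_mono (N.word_image_V_subset hinv s)
  have h2 : N.word (i' :: s') '' V ⊆ N.f i' '' V := by
    have : N.word (i' :: s') '' V = N.f i' '' (N.word s' '' V) := by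
      rw [Set.image_image]; rfl
    rw [this]
    exact Set.image_mono (N.word_image_V_subset hinv s')
  exact Set.disjoint_of_subset h1 h2 (Set.disjoint_iff_inter_eq_empty.2 (hdisjV i i' hii'))

section ratio

variable {c : Fin N.n → ℝ}

lemma dist_word (hcd : ∀ k x y, dist (N.f k x) (N.f k y) = c k * dist x y) :
    ∀ (σ : List (Fin N.n)) (x y : Euc d),
      dist (N.word σ x) (N.word σ y) = (σ.map c).prod * dist x y := by
  intro σ
  induction σ with
  | nil => simp [word]
  | cons i s ih =>
    intro x y
    rw [N.word_cons, N.word_cons, hcd, ih, List.map_cons, List.prod_cons, mul_assoc]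

lemma prodc_pos (hc0 : ∀ k, 0 < c k) (σ : List (Fin N.n)) : 0 < (σ.map c).prod := by
  induction σ with
  | nil => simp
  | cons i s ih => rw [List.map_cons, List.prod_cons]; exact mul_pos (hc0 i) ih

lemma prodc_le_one (hc0 : ∀ k, 0 < c k) (hc1 : ∀ k, c k < 1) (σ : List (Fin N.n)) :
    (σ.map c).prod ≤ 1 := by
  induction σ with
  | nil => simp
  | cons i s ih =>
    rw [List.map_cons, List.prod_cons]
    calc c i * (s.map c).prod ≤ 1 * 1 :=
      mul_le_mul (hc1 i).le ih (N.prodc_pos hc0 s).le zero_le_one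
    _ = 1 := one_mul 1

/-- Refine a word containing `x` until its ratio lies in `(ρ·rmin, ρ]`. -/
lemma descend (hc0 : ∀ k, 0 < c k) (hc1 : ∀ k, c k < 1)
    {rmin : ℝ} (hrminpos : 0 < rmin) (hrmin : ∀ k, rmin ≤ c k)
    {x : Euc d} {σ₀ : List (Fin N.n)} (hx : x ∈ N.copy σ₀)
    {ρ : ℝ} (hρ : 0 < ρ) (hρle : ρ ≤ (σ₀.map c).prod) :
    ∃ σ₁, x ∈ N.copy (σ₀ ++ σ₁) ∧ ρ * rmin < ((σ₀ ++ σ₁).map c).prod ∧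
      ((σ₀ ++ σ₁).map c).prod ≤ ρ := by
  classical
  haveI : Nonempty (Fin N.n) := ⟨⟨0, by have := N.hn; omega⟩⟩
  set k0 : Fin N.n := ⟨0, by have := N.hn; omega⟩ with hk0
  have hne : (Finset.univ : Finset (Fin N.n)).Nonempty := Finset.univ_nonempty
  set q : ℝ := (Finset.univ.image c).max' (hne.image c) with hq
  have hcq : ∀ k, c k ≤ q := fun k =>
    Finset.le_max' _ _ (Finset.mem_image_of_mem c (Finset.mem_univ k))
  have hq1 : q < 1 := by
    rw [hq]
    refine (Finset.max'_lt_iff _ _).2 ?_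
    intro y hy
    obtain ⟨k, -, rfl⟩ := Finset.mem_image.1 hy
    exact hc1 k
  have hq0 : 0 < q := lt_of_lt_of_le (hc0 k0) (hcq k0)
  have H : ∀ (t : ℕ) (σ : List (Fin N.n)), x ∈ N.copy σ → ρ * rmin < (σ.map c).prod →
      (σ.map c).prod * q ^ t ≤ ρ →
      ∃ σ₁, x ∈ N.copy (σ ++ σ₁) ∧ ρ * rmin < ((σ ++ σ₁).map c).prod ∧
        ((σ ++ σ₁).map c).prod ≤ ρ := by
    intro t
    induction t with
    | zero =>
      intro σ hmem hlo hhi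
      exact ⟨[], by simpa using hmem, by simpa using hlo, by simpa using hhi⟩
    | succ t ih =>
      intro σ hmem hlo hhi
      by_cases hstop : (σ.map c).prod ≤ ρ
      · exact ⟨[], by simpa using hmem, by simpa using hlo, by simpa using hstop⟩
      · push_neg at hstop
        obtain ⟨y, hyF, hyx⟩ := hmem
        have hyF' : y ∈ ⋃ k, N.f k '' N.F := by rw [← N.Fattr]; exact hyF
        obtain ⟨i, hyi⟩ := Set.mem_iUnion.1 hyF'
        have hmem' : x ∈ N.copy (σ ++ [i]) := by
          rw [N.copy_append]
          refine ⟨y, ?_, hyx⟩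
          rw [copy_cons, copy_nil]
          exact hyi
        have hprod : ((σ ++ [i]).map c).prod = (σ.map c).prod * c i := by simp
        have hppos : 0 < (σ.map c).prod := N.prodc_pos hc0 σ
        have hqt : (0:ℝ) ≤ q ^ t := by positivity
        have side1 : ρ * rmin < ((σ ++ [i]).map c).prod := by
          rw [hprod]
          have h1 : rmin ≤ c i := hrmin i
          nlinarith
        have side2 : ((σ ++ [i]).map c).prod * q ^ t ≤ ρ := by
          rw [hprod]
          have h1 : c i ≤ q := hcq i
          have h2 : (σ.map c).prod * c i * q ^ t ≤ (σ.map c).prod * (q ^ (t+1)) := by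
            have : (σ.map c).prod * c i * q ^ t ≤ (σ.map c).prod * q * q ^ t :=
              mul_le_mul_of_nonneg_right (mul_le_mul_of_nonneg_left h1 hppos.le) hqt
            calc (σ.map c).prod * c i * q ^ t ≤ (σ.map c).prod * q * q ^ t := this
              _ = (σ.map c).prod * (q ^ (t+1)) := by ring
          exact h2.trans hhi
        obtain ⟨σ₁, h1, h2, h3⟩ := ih (σ ++ [i]) hmem' side1 side2
        exact ⟨[i] ++ σ₁, by simpa [List.append_assoc] using h1,
          by simpa [List.append_assoc] using h2, by simpa [List.append_assoc] using h3⟩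
  obtain ⟨t, ht⟩ := exists_pow_lt_of_lt_one hρ hq1
  refine H t σ₀ hx ?_ ?_
  · have h1 : rmin < 1 := lt_of_le_of_lt (hrmin k0) (hc1 k0)
    nlinarith
  · have h2 : (σ₀.map c).prod ≤ 1 := N.prodc_le_one hc0 hc1 σ₀
    have hqt : (0:ℝ) ≤ q ^ t := by positivity
    nlinarith

end ratio
end Necklace

namespace Necklace
variable {d : ℕ} (N : Necklace d)

lemma key (hss : N.SelfSimilar) (hosc : N.OSC) {x : Euc d} {j j' : Fin N.n}
    (hjj' : j ≠ j') (hxj : x ∈ N.f j '' N.F) (hxj' : x ∈ N.f j' '' N.F) :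
    ∀ τ : List (Fin N.n), τ ≠ [] → N.word τ x ≠ x := by
  rintro τ hτne heq
  obtain ⟨V, hVne, hVopen, hVbd, hVinv, hVdisj⟩ := hosc
  rcases subsingleton_or_nontrivial (Euc d) with hsub | hnt
  · obtain ⟨v, hv⟩ := hVne
    have h1 : N.f j v ∈ N.f j '' V := Set.mem_image_of_mem _ hv
    have h2 : N.f j v ∈ N.f j' '' V := by
      have : N.f j v = N.f j' v := Subsingleton.elim _ _
      rw [this]; exact Set.mem_image_of_mem _ hv
    have : N.f j v ∈ (∅ : Set (Euc d)) := (hVdisj j j' hjj') ▸ ⟨h1, h2⟩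
    exact absurd this (Set.notMem_empty _)
  · classical
    choose c hc0 hc1 hcd using hss
    haveI : Nonempty (Fin N.n) := ⟨⟨0, by have := N.hn; omega⟩⟩
    obtain ⟨k₀, -, hk₀⟩ := Finset.exists_min_image Finset.univ c Finset.univ_nonempty
    set rmin : ℝ := c k₀ with hrmindef
    have hrminpos : 0 < rmin := hc0 k₀
    have hrmin : ∀ k, rmin ≤ c k := fun k => hk₀ k (Finset.mem_univ k)
    obtain ⟨v₀, hv₀⟩ := hVne
    obtain ⟨ρ₀, hρ₀pos, hball⟩ := Metric.isOpen_iff.1 hVopen v₀ hv₀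
    obtain ⟨M₀', hM₀'⟩ := N.Fcpt.isBounded.subset_closedBall v₀
    set M₀ : ℝ := max M₀' 0 with hM₀def
    have hM : ∀ w ∈ N.F, dist w v₀ ≤ M₀ := fun w hw =>
      le_trans (mem_closedBall.1 (hM₀' hw)) (le_max_left _ _)
    have hM0 : 0 ≤ M₀ := le_max_right _ _
    -- decompose τ
    rcases τ with - | ⟨t, τ''⟩
    · exact hτne rfl
    clear hτne
    -- the letter b
    set b : Fin N.n := if t = j then j' else j with hbdef
    have hb : b ≠ t := by
      rw [hbdef]
      split_ifs with h
      · rw [h]; exact fun hc => hjj' hc.symm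
      · exact fun hc => h hc.symm
    have hxb : x ∈ N.f b '' N.F := by
      rw [hbdef]; split_ifs <;> assumption
    -- powers of τ
    set pw : ℕ → List (Fin N.n) := fun m => (List.replicate m (t :: τ'')).flatten with hpwdef
    have pw_zero : pw 0 = [] := rfl
    have pw_succ : ∀ m, pw (m + 1) = (t :: τ'') ++ pw m := by
      intro m
      show (List.replicate (m + 1) (t :: τ'')).flatten = (t :: τ'') ++ (List.replicate m (t :: τ'')).flatten
      rw [List.replicate_succ, List.flatten_cons]
    have pw_add : ∀ a b', pw (a + b') = pw a ++ pw b' := by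
      intro a b'
      show (List.replicate (a + b') (t :: τ'')).flatten = _ ++ _
      rw [List.replicate_add, List.flatten_append]
    have hwpw : ∀ m, N.word (pw m) x = x := by
      intro m
      induction m with
      | zero => rfl
      | succ m ih => rw [pw_succ, N.word_append, ih, heq]
    set r : ℝ := ((t :: τ'').map c).prod with hrdef
    have hr0 : 0 < r := N.prodc_pos hc0 _
    have hr1 : r ≤ 1 := N.prodc_le_one hc0 hc1 _
    have hpwprod : ∀ m, ((pw m).map c).prod = r ^ m := by
      intro m
      induction m with
      | zero => simp [pw_zero]
      | succ m ih => rw [pw_succ, List.map_append, List.prod_append, ih, pow_succ, hrdef]; ring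
    -- constants
    set A : ℝ := rmin * ρ₀ with hAdef
    have hApos : 0 < A := mul_pos hrminpos hρ₀pos
    set B : ℝ := M₀ + A with hBdef
    have hBpos : 0 < B := by positivity
    set Cst : ℝ := B / A with hCdef
    set K : ℕ := ⌈Cst ^ d⌉₊ with hKdef
    set ρK : ℝ := r ^ K * rmin with hρKdef
    have hρKpos : 0 < ρK := by positivity
    set ε : ℝ := ρK * A with hεdef
    have hεpos : 0 < ε := by positivity
    set Rb : ℝ := ρK * B with hRbdef
    have hRbpos : 0 < Rb := by positivity
    -- membership in starting words
    have hmem : ∀ m : ℕ, x ∈ N.copy (pw m ++ [b]) := by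
      intro m
      rw [N.copy_append]
      refine ⟨x, ?_, hwpw m⟩
      rw [copy_cons, copy_nil]
      exact hxb
    have hρKle : ∀ m : ℕ, m ≤ K → ρK ≤ (((pw m ++ [b]).map c).prod) := by
      intro m hm
      have hprod : ((pw m ++ [b]).map c).prod = r ^ m * c b := by
        rw [List.map_append, List.prod_append, hpwprod]; simp
      rw [hprod, hρKdef]
      have h1 : r ^ K ≤ r ^ m := pow_le_pow_of_le_one hr0.le hr1 hm
      have h2 : rmin ≤ c b := hrmin b
      have h3 : (0:ℝ) ≤ r ^ K := by positivity
      have h4 : (0:ℝ) < r ^ m := by positivity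
      nlinarith
    -- refined words
    have hdes : ∀ m : Fin (K + 1), ∃ σ₁, x ∈ N.copy ((pw m.1 ++ [b]) ++ σ₁) ∧
        ρK * rmin < (((pw m.1 ++ [b]) ++ σ₁).map c).prod ∧
        (((pw m.1 ++ [b]) ++ σ₁).map c).prod ≤ ρK := by
      intro m
      exact N.descend hc0 hc1 hrminpos hrmin (hmem m.1) hρKpos
        (hρKle m.1 (by omega))
    choose ext hext hlo hhi using hdes
    set σf : Fin (K + 1) → List (Fin N.n) := fun m => (pw m.1 ++ [b]) ++ ext m with hσfdef
    set ctr : Fin (K + 1) → Euc d := fun m => N.word (σf m) v₀ with hctrdef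
    set Rm : Fin (K + 1) → ℝ := fun m => ((σf m).map c).prod with hRmdef
    have hRmpos : ∀ m, 0 < Rm m := fun m => N.prodc_pos hc0 _
    -- ball inclusion
    have hballm : ∀ m, ball (ctr m) (Rm m * ρ₀) ⊆ N.word (σf m) '' V := by
      intro m y hy
      obtain ⟨w, rfl⟩ := (N.word (σf m)).surjective y
      have hdw : dist (N.word (σf m) w) (ctr m) = Rm m * dist w v₀ :=
        N.dist_word hcd (σf m) w v₀
      rw [mem_ball, hdw] at hy
      have : dist w v₀ < ρ₀ := lt_of_mul_lt_mul_left hy (hRmpos m).le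
      exact ⟨w, hball (mem_ball.2 this), rfl⟩
    -- disjointness
    have haux : ∀ m m' : Fin (K + 1), (m : ℕ) < m' →
        Disjoint (N.word (σf m) '' V) (N.word (σf m') '' V) := by
      intro m m' hlt
      set s : ℕ := m'.1 - m.1 - 1 with hsdef
      have hm' : m'.1 = m.1 + (s + 1) := by omega
      have hpw' : pw m'.1 = pw m.1 ++ ((t :: τ'') ++ pw s) := by
        rw [hm', pw_add, pw_succ]
      have e1 : σf m = pw m.1 ++ (b :: ext m) := by
        rw [hσfdef]
        simp [List.append_assoc]
      have e2 : σf m' = pw m.1 ++ (t :: (τ'' ++ (pw s ++ ([b] ++ ext m')))) := by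
        rw [hσfdef]
        simp only [hpw']
        simp [List.append_assoc]
      rw [e1, e2]
      exact N.word_sep hVinv hVdisj _ _ _ hb
    have hdisjm : ∀ m m' : Fin (K + 1), m ≠ m' →
        Disjoint (N.word (σf m) '' V) (N.word (σf m') '' V) := by
      intro m m' hne
      rcases lt_or_gt_of_ne (fun h : (m : ℕ) = m' => hne (Fin.ext h)) with h | h
      · exact haux m m' h
      · exact (haux m' m h).symm
    -- small balls
    have hεlt : ∀ m, ε ≤ Rm m * ρ₀ := by
      intro m
      have := hlo m
      rw [hεdef, hAdef]
      calc ρK * (rmin * ρ₀) = (ρK * rmin) * ρ₀ := by ring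
        _ ≤ Rm m * ρ₀ := mul_le_mul_of_nonneg_right (this.le) hρ₀pos.le
    have hsmall : ∀ m, ball (ctr m) ε ⊆ N.word (σf m) '' V :=
      fun m => (ball_subset_ball (hεlt m)).trans (hballm m)
    have hpair : Set.PairwiseDisjoint
        ((Finset.univ : Finset (Fin (K + 1))) : Set (Fin (K + 1)))
        (fun m => ball (ctr m) ε) := by
      intro m _ m' _ hne
      exact Set.disjoint_of_subset (hsmall m) (hsmall m') (hdisjm m m' hne)
    -- big ball
    have hctr : ∀ m, dist (ctr m) x ≤ ρK * M₀ := by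
      intro m
      obtain ⟨w, hwF, hwx⟩ := hext m
      have : dist (ctr m) x = Rm m * dist v₀ w := by
        rw [hctrdef]
        simp only
        rw [← hwx]
        exact N.dist_word hcd (σf m) v₀ w
      rw [this, dist_comm v₀ w]
      have h1 : Rm m ≤ ρK := hhi m
      have h2 : dist w v₀ ≤ M₀ := hM w hwF
      nlinarith [hRmpos m, dist_nonneg (x := w) (y := v₀)]
    have hsubbig : ∀ m : Fin (K + 1), ball (ctr m) ε ⊆ ball x Rb := by
      intro m y hy
      rw [mem_ball] at hy ⊢
      have := hctr m
      have hd : dist y x ≤ dist y (ctr m) + dist (ctr m) x := dist_triangle _ _ _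
      rw [hRbdef, hBdef]
      have : ε = ρK * A := hεdef
      nlinarith
    -- measure computation
    have hu0 : volume (ball (0 : Euc d) 1) ≠ 0 := (measure_ball_pos volume _ one_pos).ne'
    have hut : volume (ball (0 : Euc d) 1) ≠ ⊤ := measure_ball_lt_top.ne
    have hballvol : ∀ (cp : Euc d) (rr : ℝ), 0 ≤ rr →
        volume (ball cp rr) = ENNReal.ofReal (rr ^ d) * volume (ball (0 : Euc d) 1) := by
      intro cp rr hrr
      rw [Measure.addHaar_ball volume cp hrr, finrank_euclideanSpace_fin]
    have hsum := measure_biUnion_finset (μ := (volume : Measure (Euc d))) hpair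
      (fun m _ => measurableSet_ball)
    have hle : ∑ m : Fin (K + 1), volume (ball (ctr m) ε) ≤ volume (ball x Rb) := by
      rw [← hsum]
      exact measure_mono (Set.iUnion₂_subset fun m _ => hsubbig m)
    have hsum' : ∑ m : Fin (K + 1), volume (ball (ctr m) ε)
        = (K + 1 : ℕ) * (ENNReal.ofReal (ε ^ d) * volume (ball (0 : Euc d) 1)) := by
      rw [Finset.sum_congr rfl fun m _ => hballvol (ctr m) ε hεpos.le]
      rw [Finset.sum_const, Finset.card_univ, Fintype.card_fin, nsmul_eq_mul]
    rw [hsum', hballvol x Rb hRbpos.le] at hle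
    rw [← mul_assoc] at hle
    have hle2 : ((K + 1 : ℕ) : ENNReal) * ENNReal.ofReal (ε ^ d) ≤ ENNReal.ofReal (Rb ^ d) :=
      (ENNReal.mul_le_mul_iff_left hu0 hut).1 hle
    have hle3 : ((K + 1 : ℕ) : ℝ) * ε ^ d ≤ Rb ^ d := by
      have hcast : ((K + 1 : ℕ) : ENNReal) = ENNReal.ofReal ((K + 1 : ℕ) : ℝ) := by
        rw [ENNReal.ofReal_natCast]
      rw [hcast, ← ENNReal.ofReal_mul (by positivity)] at hle2
      exact (ENNReal.ofReal_le_ofReal_iff (by positivity)).1 hle2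
    -- final contradiction
    have hεeq : ε ^ d = ρK ^ d * A ^ d := by rw [hεdef, mul_pow]
    have hRbeq : Rb ^ d = ρK ^ d * B ^ d := by rw [hRbdef, mul_pow]
    have hρKd : (0:ℝ) < ρK ^ d := by positivity
    have hAd : (0:ℝ) < A ^ d := by positivity
    have hfin : ((K + 1 : ℕ) : ℝ) ≤ Cst ^ d := by
      rw [hCdef, div_pow, le_div_iff₀ hAd]
      have h1 : ((K + 1 : ℕ) : ℝ) * (ρK ^ d * A ^ d) ≤ ρK ^ d * B ^ d := by
        rw [← hεeq, ← hRbeq]; exact hle3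
      have h2 : ρK ^ d * (((K + 1 : ℕ) : ℝ) * A ^ d) ≤ ρK ^ d * B ^ d := by
        calc ρK ^ d * (((K + 1 : ℕ) : ℝ) * A ^ d)
            = ((K + 1 : ℕ) : ℝ) * (ρK ^ d * A ^ d) := by ring
          _ ≤ ρK ^ d * B ^ d := h1
      exact le_of_mul_le_mul_left h2 hρKd
    have hceil : Cst ^ d ≤ (K : ℝ) := Nat.le_ceil _
    push_cast at hfin
    linarith

end Necklace

/-- Every self-similar necklace in `ℝ^d` satisfying the open set condition is of
bounded ramification. -/
theorem Necklace.boundedRamification_of_selfSimilar_osc {d : ℕ} (N : Necklace d)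
    (hss : N.SelfSimilar) (hosc : N.OSC) : N.BoundedRamification := by
  intro k
  refine ⟨N.n ^ N.n, fun m => ?_⟩
  have hkey : ∀ {x : Euc d} {j j' : Fin N.n}, j ≠ j' → x ∈ N.f j '' N.F →
      x ∈ N.f j' '' N.F → ∀ τ : List (Fin N.n), τ ≠ [] → N.word τ x ≠ x :=
    fun hjj' hxj hxj' => N.key hss hosc hjj' hxj hxj'
  refine (N.main_bound hkey m (N.z k)).trans ?_
  refine Nat.pow_le_pow_right (by have := N.hn; omega) ?_
  calc (N.Rset (N.z k)).ncard
      ≤ (Set.univ : Set (Fin N.n)).ncard :=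
        Set.ncard_le_ncard (Set.subset_univ _) Set.finite_univ
    _ = N.n := by rw [Set.ncard_univ]; simp
end
end

section
/- Every fractal necklace F contains a topological circle (a homeomorphic image of the unit circle S^1) passing through all main nodes z_1,…,z_n of F, provided F has Property I (each 1-level copy F_k has an arc from z_{k−1} to z_k passing through at least two main nodes of F_k). More weakly: every necklace contains a topological circle through all its main nodes, obtained by concatenating arcs γ^{(k)} ⊆ F_k from z_{k−1} to z_k. -/
open Set Topology Metric Bornology

noncomputable section

section Aux

private lemma contOn_union' {X : Type*} [TopologicalSpace X] {f : ℝ → X} {s t : Set ℝ}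
    (hs : IsClosed s) (ht : IsClosed t) (h1 : ContinuousOn f s) (h2 : ContinuousOn f t) :
    ContinuousOn f (s ∪ t) := by
  intro x hx
  apply ContinuousWithinAt.union
  · by_cases hxs : x ∈ s
    · exact h1 x hxs
    · exact continuousWithinAt_of_notMem_closure (by rwa [hs.closure_eq])
  · by_cases hxt : x ∈ t
    · exact h2 x hxt
    · exact continuousWithinAt_of_notMem_closure (by rwa [ht.closure_eq])

namespace Necklace

variable {d : ℕ}

/-- The chosen injective arc in the `k`-th 1-level copy, from `z (k-1)` to `z k`. -/
private noncomputable def arc (N : Necklace d) (hPI : N.PropertyI) (k : Fin N.n) :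
    Path (N.z (k - N.one)) (N.z k) :=
  (hPI k).choose

private lemma arc_inj (N : Necklace d) (hPI : N.PropertyI) (k : Fin N.n) :
    Function.Injective (N.arc hPI k) :=
  (hPI k).choose_spec.1

private lemma arc_mem (N : Necklace d) (hPI : N.PropertyI) (k : Fin N.n) (t : unitInterval) :
    N.arc hPI k t ∈ N.f k '' N.F :=
  (hPI k).choose_spec.2.1 t

private lemma npos (N : Necklace d) : (0 : ℝ) < (N.n : ℝ) := by
  have := N.hn; exact_mod_cast by omega

/-- The index of the subinterval of `[0,1]` containing `t`. -/
private def idx (N : Necklace d) (t : ℝ) : Fin N.n :=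
  ⟨min (N.n - 1) (⌊(N.n : ℝ) * t⌋).toNat, by have := N.hn; omega⟩

/-- The circle parametrization: on `[k/n, (k+1)/n]` it traverses the `k`-th arc. -/
private noncomputable def gfun (N : Necklace d) (hPI : N.PropertyI) (t : ℝ) : Euc d :=
  (N.arc hPI (N.idx t)).extend ((N.n : ℝ) * t - ((N.idx t : ℕ) : ℝ))

private lemma sub_one_mk (N : Necklace d) (k : ℕ) (hk : k + 1 < N.n) :
    (⟨k + 1, hk⟩ : Fin N.n) - N.one = ⟨k, by omega⟩ := by
  have hn := N.hn
  apply Fin.ext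
  rw [Fin.sub_def]
  show (N.n - 1 + (k + 1)) % N.n = k
  have h1 : N.n - 1 + (k + 1) = k + N.n := by omega
  rw [h1, Nat.add_mod_right, Nat.mod_eq_of_lt (by omega)]

private lemma zero_sub_one (N : Necklace d) (h0 : 0 < N.n) :
    (⟨0, h0⟩ : Fin N.n) - N.one = ⟨N.n - 1, by omega⟩ := by
  have hn := N.hn
  apply Fin.ext
  rw [Fin.sub_def]
  show (N.n - 1 + 0) % N.n = N.n - 1
  rw [Nat.add_zero, Nat.mod_eq_of_lt (by omega)]

private lemma idx_eq (N : Necklace d) (k : ℕ) (hk : k < N.n) (t : ℝ)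
    (h1 : (k : ℝ) ≤ (N.n : ℝ) * t) (h2 : (N.n : ℝ) * t < (k : ℝ) + 1) :
    N.idx t = ⟨k, hk⟩ := by
  have hfl : ⌊(N.n : ℝ) * t⌋ = (k : ℤ) := by
    rw [Int.floor_eq_iff]
    constructor <;> push_cast <;> linarith
  apply Fin.ext
  show min (N.n - 1) (⌊(N.n : ℝ) * t⌋).toNat = k
  rw [hfl]
  simp only [Int.toNat_natCast]
  omega

private lemma gfun_eq (N : Necklace d) (hPI : N.PropertyI) (k : ℕ) (hk : k < N.n) (t : ℝ)
    (h1 : (k : ℝ) / (N.n : ℝ) ≤ t) (h2 : t ≤ ((k : ℝ) + 1) / (N.n : ℝ)) :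
    N.gfun hPI t = (N.arc hPI ⟨k, hk⟩).extend ((N.n : ℝ) * t - (k : ℝ)) := by
  have hnpos := N.npos
  have h1' : (k : ℝ) ≤ (N.n : ℝ) * t := by
    rw [div_le_iff₀ hnpos] at h1; linarith
  have h2' : (N.n : ℝ) * t ≤ (k : ℝ) + 1 := by
    rw [le_div_iff₀ hnpos] at h2; linarith
  rcases lt_or_eq_of_le h2' with h2'' | h2''
  · rw [gfun, N.idx_eq k hk t h1' h2'']
  · by_cases hk1 : k + 1 < N.n
    · have hidx : N.idx t = ⟨k + 1, hk1⟩ := by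
        apply N.idx_eq (k + 1) hk1 t <;> push_cast <;> linarith
      rw [gfun, hidx]
      have e1 : (N.n : ℝ) * t - (((⟨k + 1, hk1⟩ : Fin N.n) : ℕ) : ℝ) = 0 := by
        push_cast; linarith
      have e2 : (N.n : ℝ) * t - (k : ℝ) = 1 := by linarith
      rw [e1, e2, Path.extend_zero, Path.extend_one, N.sub_one_mk k hk1]
    · have hidx : N.idx t = ⟨k, hk⟩ := by
        have hfl : ⌊(N.n : ℝ) * t⌋ = (k : ℤ) + 1 := by
          rw [Int.floor_eq_iff]
          constructor <;> push_cast <;> linarith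
        apply Fin.ext
        show min (N.n - 1) (⌊(N.n : ℝ) * t⌋).toNat = k
        rw [hfl]
        have h3 : ((k : ℤ) + 1).toNat = k + 1 := by omega
        rw [h3]
        omega
      rw [gfun, hidx]

private lemma gfun_contOn (N : Necklace d) (hPI : N.PropertyI) :
    ContinuousOn (N.gfun hPI) (Set.Icc 0 1) := by
  have hnpos := N.npos
  have key : ∀ m : ℕ, m ≤ N.n → ContinuousOn (N.gfun hPI) (Set.Icc 0 ((m : ℝ) / (N.n : ℝ))) := by
    intro m
    induction m with
    | zero =>
      intro _
      simp only [Nat.cast_zero, zero_div, Set.Icc_self]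
      exact continuousOn_singleton _ _
    | succ m ih =>
      intro hm
      have hmlt : m < N.n := by omega
      have hmn : (m : ℝ) / (N.n : ℝ) ≤ ((m + 1 : ℕ) : ℝ) / (N.n : ℝ) := by
        apply div_le_div_of_nonneg_right ?_ hnpos.le
        push_cast; linarith
      have hsplit : Set.Icc (0 : ℝ) (((m + 1 : ℕ) : ℝ) / (N.n : ℝ)) =
          Set.Icc 0 ((m : ℝ) / (N.n : ℝ)) ∪
            Set.Icc ((m : ℝ) / (N.n : ℝ)) (((m + 1 : ℕ) : ℝ) / (N.n : ℝ)) :=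
        (Set.Icc_union_Icc_eq_Icc (by positivity) hmn).symm
      rw [hsplit]
      apply contOn_union' isClosed_Icc isClosed_Icc (ih (by omega))
      apply ContinuousOn.congr
        (f := fun t => (N.arc hPI ⟨m, hmlt⟩).extend ((N.n : ℝ) * t - (m : ℝ)))
      · exact ((N.arc hPI ⟨m, hmlt⟩).continuous_extend.comp (by continuity)).continuousOn
      · intro t ht
        refine N.gfun_eq hPI m hmlt t ht.1 ?_
        have := ht.2
        push_cast at this ⊢
        linarith
  have := key N.n le_rfl
  rwa [div_self (ne_of_gt hnpos)] at this

private lemma gfun_zero (N : Necklace d) (hPI : N.PropertyI) :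
    N.gfun hPI 0 = N.z ⟨N.n - 1, by have := N.hn; omega⟩ := by
  have hn := N.hn
  have hnpos := N.npos
  have h := N.gfun_eq hPI 0 (by omega) 0 (by simp) (by positivity)
  have e : (N.n : ℝ) * 0 - ((0 : ℕ) : ℝ) = 0 := by norm_num
  rw [h, e, Path.extend_zero, N.zero_sub_one (by omega)]

private lemma gfun_one (N : Necklace d) (hPI : N.PropertyI) :
    N.gfun hPI 1 = N.z ⟨N.n - 1, by have := N.hn; omega⟩ := by
  have hn := N.hn
  have hnpos := N.npos
  have hc : ((N.n - 1 : ℕ) : ℝ) = (N.n : ℝ) - 1 := by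
    push_cast [Nat.cast_sub (by omega : 1 ≤ N.n)]; ring
  have h := N.gfun_eq hPI (N.n - 1) (by omega) 1 ?_ ?_
  · rw [h]
    have e : (N.n : ℝ) * 1 - ((N.n - 1 : ℕ) : ℝ) = 1 := by rw [hc]; ring
    rw [e, Path.extend_one]
  · rw [div_le_one hnpos, hc]; linarith
  · rw [le_div_iff₀ hnpos, hc]; linarith

private lemma gfun_val (N : Necklace d) (hPI : N.PropertyI) (s : ℝ)
    (hs : s ∈ Set.Ico (0 : ℝ) 1) :
    ∃ u : ℝ, 0 ≤ u ∧ u < 1 ∧ s = (((N.idx s : ℕ) : ℝ) + u) / (N.n : ℝ) ∧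
      N.gfun hPI s = (N.arc hPI (N.idx s)).extend u := by
  have hnpos := N.npos
  have hr0 : 0 ≤ (N.n : ℝ) * s := by nlinarith [hs.1]
  have hr1 : (N.n : ℝ) * s < (N.n : ℝ) := by nlinarith [hs.2]
  have hfl0 : 0 ≤ ⌊(N.n : ℝ) * s⌋ := Int.floor_nonneg.mpr hr0
  have hfln : ⌊(N.n : ℝ) * s⌋ < (N.n : ℤ) := by
    rw [Int.floor_lt]; exact_mod_cast hr1
  have hidxv : ((N.idx s : ℕ) : ℝ) = ((⌊(N.n : ℝ) * s⌋ : ℤ) : ℝ) := by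
    have h1 : (N.idx s : ℕ) = (⌊(N.n : ℝ) * s⌋).toNat := by
      show min (N.n - 1) (⌊(N.n : ℝ) * s⌋).toNat = _
      omega
    rw [h1]
    exact_mod_cast congrArg (fun z : ℤ => (z : ℝ)) (Int.toNat_of_nonneg hfl0)
  refine ⟨(N.n : ℝ) * s - ((⌊(N.n : ℝ) * s⌋ : ℤ) : ℝ), ?_, ?_, ?_, ?_⟩
  · linarith [Int.floor_le ((N.n : ℝ) * s)]
  · linarith [Int.lt_floor_add_one ((N.n : ℝ) * s)]
  · rw [hidxv]; field_simp; ring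
  · show (N.arc hPI (N.idx s)).extend ((N.n : ℝ) * s - ((N.idx s : ℕ) : ℝ)) = _
    rw [hidxv]

private lemma gfun_injOn (N : Necklace d) (hPI : N.PropertyI) :
    Set.InjOn (N.gfun hPI) (Set.Ico 0 1) := by
  intro s hs t ht hst
  obtain ⟨u, hu0, hu1, hsu, hgs⟩ := N.gfun_val hPI s hs
  obtain ⟨v, hv0, hv1, htv, hgt⟩ := N.gfun_val hPI t ht
  set j := N.idx s with hj
  set k := N.idx t with hk
  have hus : N.gfun hPI s = N.arc hPI j ⟨u, hu0, hu1.le⟩ := by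
    rw [hgs]; exact Path.extend_apply _ ⟨hu0, hu1.le⟩
  have hvt : N.gfun hPI t = N.arc hPI k ⟨v, hv0, hv1.le⟩ := by
    rw [hgt]; exact Path.extend_apply _ ⟨hv0, hv1.le⟩
  have hmem_s : N.gfun hPI s ∈ N.f j '' N.F := by
    rw [hus]; exact N.arc_mem hPI j _
  have hmem_t : N.gfun hPI s ∈ N.f k '' N.F := by
    rw [hst, hvt]; exact N.arc_mem hPI k _
  have hjk : j = k := by
    by_contra hne
    by_cases h1 : k = j + N.one
    · have hzmem : N.gfun hPI s ∈ ({N.z j} : Set (Euc d)) := by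
        rw [← N.hz j]
        exact ⟨hmem_s, by rw [h1] at hmem_t; exact hmem_t⟩
      have harc : N.arc hPI j ⟨u, hu0, hu1.le⟩ = N.arc hPI j 1 := by
        rw [← hus, Set.mem_singleton_iff.mp hzmem]
        exact ((N.arc hPI j).target).symm
      have := congrArg Subtype.val (N.arc_inj hPI j harc)
      simp only [Set.Icc.coe_one] at this
      linarith
    · by_cases h2 : j = k + N.one
      · have hzmem : N.gfun hPI s ∈ ({N.z k} : Set (Euc d)) := by
          rw [← N.hz k]
          exact ⟨hmem_t, by rw [h2] at hmem_s; exact hmem_s⟩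
        have harc : N.arc hPI k ⟨v, hv0, hv1.le⟩ = N.arc hPI k 1 := by
          rw [← hvt, ← hst, Set.mem_singleton_iff.mp hzmem]
          exact ((N.arc hPI k).target).symm
        have := congrArg Subtype.val (N.arc_inj hPI k harc)
        simp only [Set.Icc.coe_one] at this
        linarith
      · have hdis := N.hdisj j k hne h2 h1
        have : N.gfun hPI s ∈ (∅ : Set (Euc d)) := by
          rw [← hdis]; exact ⟨hmem_s, hmem_t⟩
        exact absurd this (Set.notMem_empty _)
  have huv : u = v := by
    have harc : N.arc hPI j ⟨u, hu0, hu1.le⟩ = N.arc hPI j ⟨v, hv0, hv1.le⟩ := by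
      rw [← hus, hst, hvt, hjk]
    exact congrArg Subtype.val (N.arc_inj hPI j harc)
  rw [hsu, htv, hjk, huv]

end Necklace

end Aux

/-- Every fractal necklace with Property I contains a topological circle (a homeomorphic
image of the unit circle) passing through all of its main nodes `z_1, …, z_n`. -/
theorem Necklace.exists_circle_through_main_nodes {d : ℕ} (N : Necklace d)
    (hPI : N.PropertyI) :
    ∃ γ : Set (Euc d), γ ⊆ N.F ∧ (∀ k : Fin N.n, N.z k ∈ γ) ∧
      Nonempty (γ ≃ₜ Circle) := by
  haveI : Fact ((0 : ℝ) < 1) := ⟨one_pos⟩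
  have hn := N.hn
  have hnpos := N.npos
  set g := N.gfun hPI with hgdef
  set h : AddCircle (1 : ℝ) → Euc d := AddCircle.liftIco 1 0 g with hhdef
  have hg01 : g 0 = g 1 := by rw [hgdef, N.gfun_zero hPI, N.gfun_one hPI]
  have hcont : Continuous h :=
    AddCircle.liftIco_continuous (by rw [zero_add]; exact hg01)
      (by rw [zero_add]; exact N.gfun_contOn hPI)
  have happ : ∀ x : AddCircle (1 : ℝ),
      h x = g ((AddCircle.equivIco 1 0 x : Set.Ico (0 : ℝ) (0 + 1)) : ℝ) := fun x => rfl
  have hinj : Function.Injective h := by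
    intro x y hxy
    obtain ⟨hx0, hx1⟩ := (AddCircle.equivIco 1 0 x).2
    obtain ⟨hy0, hy1⟩ := (AddCircle.equivIco 1 0 y).2
    have hx2 : ((AddCircle.equivIco 1 0 x : Set.Ico (0 : ℝ) (0 + 1)) : ℝ) ∈ Set.Ico (0 : ℝ) 1 :=
      ⟨hx0, by linarith⟩
    have hy2 : ((AddCircle.equivIco 1 0 y : Set.Ico (0 : ℝ) (0 + 1)) : ℝ) ∈ Set.Ico (0 : ℝ) 1 :=
      ⟨hy0, by linarith⟩
    rw [happ x, happ y] at hxy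
    have heq := N.gfun_injOn hPI hx2 hy2 hxy
    exact (AddCircle.equivIco 1 0).injective (Subtype.ext heq)
  have hsubF : ∀ k : Fin N.n, N.f k '' N.F ⊆ N.F := by
    intro k x hx
    rw [N.Fattr]
    exact Set.mem_iUnion.mpr ⟨k, hx⟩
  have hgF : ∀ t : ℝ, g t ∈ N.F := by
    intro t
    obtain ⟨w, hw⟩ : g t ∈ Set.range (N.arc hPI (N.idx t)) := by
      rw [hgdef]
      show (N.arc hPI (N.idx t)).extend _ ∈ _
      rw [← Path.extend_range]
      exact Set.mem_range_self _
    rw [← hw]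
    exact hsubF (N.idx t) (N.arc_mem hPI (N.idx t) w)
  have hmain : ∀ k : Fin N.n, ∃ t ∈ Set.Ico (0 : ℝ) 1, g t = N.z k := by
    intro k
    by_cases hk : (k : ℕ) + 1 < N.n
    · refine ⟨(((k : ℕ) + 1 : ℕ) : ℝ) / (N.n : ℝ), ⟨by positivity, ?_⟩, ?_⟩
      · rw [div_lt_one hnpos]
        exact_mod_cast hk
      · have hle : (((k : ℕ) + 1 : ℕ) : ℝ) / (N.n : ℝ) ≤
            ((((k : ℕ) + 1 : ℕ) : ℝ) + 1) / (N.n : ℝ) := by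
          apply div_le_div_of_nonneg_right ?_ hnpos.le
          linarith
        have hval := N.gfun_eq hPI ((k : ℕ) + 1) hk _ le_rfl hle
        rw [hgdef, hval]
        have e0 : (N.n : ℝ) * ((((k : ℕ) + 1 : ℕ) : ℝ) / (N.n : ℝ)) - (((k : ℕ) + 1 : ℕ) : ℝ) = 0 := by
          field_simp; ring
        rw [e0, Path.extend_zero, N.sub_one_mk (k : ℕ) hk]
    · refine ⟨0, ⟨le_rfl, one_pos⟩, ?_⟩
      rw [hgdef, N.gfun_zero hPI]
      exact congrArg N.z (Fin.ext (by have := k.isLt; show N.n - 1 = (k : ℕ); omega))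
  refine ⟨Set.range h, ?_, ?_, ?_⟩
  · rintro x ⟨y, rfl⟩
    rw [happ y]
    exact hgF _
  · intro k
    obtain ⟨t, htm, hgt⟩ := hmain k
    have hco : h ↑t = g t := AddCircle.liftIco_coe_apply (by rwa [zero_add])
    exact ⟨↑t, by rw [hco, hgt]⟩
  · have hemb := hcont.isClosedEmbedding hinj
    exact ⟨(hemb.toIsEmbedding.toHomeomorph).symm.trans
      (AddCircle.homeomorphCircle one_ne_zero)⟩
end
end
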